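/- Let Q be a symmetric positive definite real n×n matrix and Φ the diagonal matrix with Φⱼⱼ = 1 / (∑ₖ |Q⁻¹ⱼₖ|). Then Φ ≤ Q in the Loewner order, i.e., Q − Φ is positive semidefinite. -/

import Mathlib

open Matrix Finset

/-- Symmetric matrix dominated by its absolute row sums on the diagonal is PSD. -/
lemma dd_psd_aux {n : ℕ} (A : Matrix (Fin n) (Fin n) ℝ) (hA : Aᵀ = A) :
    (Matrix.diagonal (fun j => ∑ k, |A j k|) - A).PosSemidef := by
  have habs : ∀ j k, |A k j| = |A j k| := fun j k => by
    rw [show A k j = Aᵀ j k from rfl, hA]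
  rw [posSemidef_iff_dotProduct_mulVec]
  constructor
  · refine IsHermitian.sub (isHermitian_diagonal _) ?_
    rw [Matrix.IsHermitian, conjTranspose_eq_transpose_of_trivial, hA]
  · intro x
    have hsx : star x = x := by simp
    rw [hsx]
    set f : Fin n → Fin n → ℝ := fun j k => |A j k| * x j ^ 2 - A j k * (x j * x k) with hf
    have t1 : x ⬝ᵥ (Matrix.diagonal (fun j => ∑ k, |A j k|) *ᵥ x)
        = ∑ j, ∑ k, |A j k| * x j ^ 2 := by
      simp only [dotProduct, mulVec_diagonal]
      refine Finset.sum_congr rfl fun j _ => ?_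
      rw [Finset.sum_mul, Finset.mul_sum]
      exact Finset.sum_congr rfl fun k _ => by ring
    have t2 : x ⬝ᵥ (A *ᵥ x) = ∑ j, ∑ k, A j k * (x j * x k) := by
      simp only [dotProduct, mulVec]
      refine Finset.sum_congr rfl fun j _ => ?_
      rw [Finset.mul_sum]
      exact Finset.sum_congr rfl fun k _ => by ring
    have hdot : x ⬝ᵥ ((Matrix.diagonal (fun j => ∑ k, |A j k|) - A) *ᵥ x)
        = ∑ j, ∑ k, f j k := by
      rw [sub_mulVec, dotProduct_sub, t1, t2, ← Finset.sum_sub_distrib]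
      exact Finset.sum_congr rfl fun j _ => (Finset.sum_sub_distrib _ _).symm
    have hswap : (∑ j, ∑ k, f j k) = ∑ j, ∑ k, f k j := by
      rw [Finset.sum_comm]
    have h2 : 0 ≤ (∑ j, ∑ k, f j k) + (∑ j, ∑ k, f k j) := by
      rw [← Finset.sum_add_distrib]
      simp_rw [← Finset.sum_add_distrib]
      refine Finset.sum_nonneg fun j _ => Finset.sum_nonneg fun k _ => ?_
      have h1 := habs j k
      have h2' : A k j = A j k := by rw [show A k j = Aᵀ j k from rfl, hA]
      simp only [hf]
      rw [h1, h2']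
      nlinarith [le_abs_self (A j k), neg_abs_le (A j k), sq_nonneg (x j - x k),
        sq_nonneg (x j + x k), abs_nonneg (A j k)]
    rw [hdot]
    linarith [hswap ▸ h2]

open scoped MatrixOrder in
/-- If `N` is PD and `N ≤ 1`, then `1 ≤ N⁻¹`. -/
lemma aux_one_le_inv {n : ℕ} {N : Matrix (Fin n) (Fin n) ℝ} (hN : N.PosDef)
    (h : ((1 : Matrix (Fin n) (Fin n) ℝ) - N).PosSemidef) : (N⁻¹ - 1).PosSemidef := by
  have hNinv : N⁻¹.PosDef := hN.inv
  refine posSemidef_iff_dotProduct_mulVec.mpr ⟨hNinv.isHermitian.sub isHermitian_one, fun x => ?_⟩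
  have hsx : star x = x := by simp
  rw [hsx]
  set R := CFC.sqrt N with hRdef
  have hRR : R * R = N := CFC.sqrt_mul_sqrt_self N hN.posSemidef.nonneg
  have hRsymm : Rᵀ = R := by
    have := (CFC.sqrt_nonneg N).posSemidef.isHermitian.eq
    rwa [conjTranspose_eq_transpose_of_trivial] at this
  have hRdet : IsUnit R.det := by
    have hh : R.det * R.det = N.det := by rw [← det_mul, hRR]
    have hNdet := hN.det_pos
    refine isUnit_iff_ne_zero.mpr fun h0 => ?_
    rw [h0, mul_zero] at hh
    exact hNdet.ne' hh.symm
  have key : ∀ (B C : Matrix (Fin n) (Fin n) ℝ),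
      (B *ᵥ x) ⬝ᵥ (C *ᵥ x) = x ⬝ᵥ ((Bᵀ * C) *ᵥ x) := by
    intro B C
    rw [← mulVec_mulVec, Matrix.dotProduct_mulVec x, vecMul_transpose,
      Matrix.dotProduct_mulVec]
  have huv : (R *ᵥ x) ⬝ᵥ (R⁻¹ *ᵥ x) = x ⬝ᵥ x := by
    rw [key, hRsymm, mul_nonsing_inv R hRdet, one_mulVec]
  have huu : (R *ᵥ x) ⬝ᵥ (R *ᵥ x) = x ⬝ᵥ (N *ᵥ x) := by
    rw [key, hRsymm, hRR]
  have hvv : (R⁻¹ *ᵥ x) ⬝ᵥ (R⁻¹ *ᵥ x) = x ⬝ᵥ (N⁻¹ *ᵥ x) := by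
    rw [key, transpose_nonsing_inv, hRsymm, ← Matrix.mul_inv_rev, hRR]
  have hcs := Finset.sum_mul_sq_le_sq_mul_sq Finset.univ (fun i => (R *ᵥ x) i)
    (fun i => (R⁻¹ *ᵥ x) i)
  simp only [dotProduct] at huv huu hvv
  rw [show (∑ i, (R *ᵥ x) i * (R⁻¹ *ᵥ x) i) = ∑ i, x i * x i from huv] at hcs
  rw [show (∑ i, (R *ᵥ x) i ^ 2) = ∑ i, x i * (N *ᵥ x) i from by
    simpa [sq] using huu] at hcs
  rw [show (∑ i, (R⁻¹ *ᵥ x) i ^ 2) = ∑ i, x i * (N⁻¹ *ᵥ x) i from by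
    simpa [sq] using hvv] at hcs
  have hb : x ⬝ᵥ (N *ᵥ x) ≤ x ⬝ᵥ x := by
    have := h.dotProduct_mulVec_nonneg x
    rw [hsx, sub_mulVec, dotProduct_sub, one_mulVec] at this
    linarith
  have hc : 0 ≤ x ⬝ᵥ (N⁻¹ *ᵥ x) := by
    have := hNinv.posSemidef.dotProduct_mulVec_nonneg x
    rwa [hsx] at this
  have ha : (0:ℝ) ≤ x ⬝ᵥ x := by
    simpa [dotProduct] using Finset.sum_nonneg fun i (_ : i ∈ Finset.univ) => mul_self_nonneg (x i)
  rw [sub_mulVec, dotProduct_sub, one_mulVec]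
  simp only [dotProduct] at *
  nlinarith [hcs, hb, hc, ha]

theorem stmt5 {n : ℕ} (Q : Matrix (Fin n) (Fin n) ℝ) (hsymm : Q.IsSymm) (hpd : Q.PosDef) :
    (Q - Matrix.diagonal fun j => 1 / ∑ k, |Q⁻¹ j k|).PosSemidef := by
  classical
  set A := Q⁻¹ with hAdef
  have hApd : A.PosDef := hpd.inv
  have hAsymm : Aᵀ = A := by
    rw [hAdef, transpose_nonsing_inv, hsymm.eq]
  set s : Fin n → ℝ := fun j => ∑ k, |A j k| with hs
  have hspos : ∀ j, 0 < s j := by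
    intro j
    have hd : 0 < A j j := by
      have hne : (Pi.single j 1 : Fin n → ℝ) ≠ 0 := by
        intro h0
        have := congrFun h0 j
        simp at this
      have := hApd.dotProduct_mulVec_pos (x := Pi.single j 1) hne
      simpa [dotProduct, mulVec, Pi.single_apply, Finset.mul_sum] using this
    calc (0:ℝ) < A j j := hd
    _ ≤ |A j j| := le_abs_self _
    _ ≤ s j := Finset.single_le_sum (f := fun k => |A j k|)
        (fun k _ => abs_nonneg _) (Finset.mem_univ j)
  set d : Fin n → ℝ := fun j => Real.sqrt (s j) with hd
  have hdpos : ∀ j, 0 < d j := fun j => Real.sqrt_pos.mpr (hspos j)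
  have hd2 : ∀ j, d j * d j = s j := fun j => Real.mul_self_sqrt (hspos j).le
  set D : Matrix (Fin n) (Fin n) ℝ := Matrix.diagonal d with hD
  set E : Matrix (Fin n) (Fin n) ℝ := Matrix.diagonal (fun j => (d j)⁻¹) with hE
  have hED : E * D = 1 := by
    rw [hE, hD, diagonal_mul_diagonal]
    ext i j
    rcases eq_or_ne i j with rfl | h
    · simp [inv_mul_cancel₀ (hdpos i).ne']
    · simp [Matrix.diagonal_apply_ne _ h, Matrix.one_apply_ne h]
  have hDE : D * E = 1 := by
    rw [hD, hE, diagonal_mul_diagonal]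
    ext i j
    rcases eq_or_ne i j with rfl | h
    · simp [mul_inv_cancel₀ (hdpos i).ne']
    · simp [Matrix.diagonal_apply_ne _ h, Matrix.one_apply_ne h]
  have hEsymm : Eᴴ = E := (isHermitian_diagonal _).eq
  set N : Matrix (Fin n) (Fin n) ℝ := E * A * E with hN
  have hB := dd_psd_aux A hAsymm
  have h1N : ((1 : Matrix (Fin n) (Fin n) ℝ) - N).PosSemidef := by
    have hps := hB.mul_mul_conjTranspose_same E
    rw [hEsymm] at hps
    have heq : E * (Matrix.diagonal s - A) * E = 1 - N := by
      rw [Matrix.mul_sub, Matrix.sub_mul, hN]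
      congr 1
      rw [hE, diagonal_mul_diagonal, diagonal_mul_diagonal]
      ext i j
      rcases eq_or_ne i j with rfl | h
      · rw [Matrix.diagonal_apply_eq, Matrix.one_apply_eq, ← hd2 i]
        field_simp
        exact div_self (hdpos i).ne'
      · simp [Matrix.diagonal_apply_ne _ h, Matrix.one_apply_ne h]
    rwa [heq] at hps
  have hNpd : N.PosDef := by
    rw [posDef_iff_dotProduct_mulVec]
    constructor
    · rw [hN, Matrix.IsHermitian, conjTranspose_mul, conjTranspose_mul, hEsymm,
        hApd.isHermitian.eq, Matrix.mul_assoc]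
    · intro x hx
      have hx' : E *ᵥ x ≠ 0 := by
        intro h0
        apply hx
        have h1 : D *ᵥ (E *ᵥ x) = D *ᵥ 0 := by rw [h0]
        rwa [mulVec_mulVec, hDE, one_mulVec, mulVec_zero] at h1
      have hq := hApd.dotProduct_mulVec_pos (x := E *ᵥ x) hx'
      have hrw : star x ⬝ᵥ (N *ᵥ x) = star (E *ᵥ x) ⬝ᵥ (A *ᵥ (E *ᵥ x)) := by
        have hsx : star x = x := by simp
        have hsEx : star (E *ᵥ x) = E *ᵥ x := by simp
        rw [hsx, hsEx, hN, ← mulVec_mulVec, ← mulVec_mulVec,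
          Matrix.dotProduct_mulVec x E]
        congr 1
        funext i
        simp [hE, vecMul_diagonal, mulVec_diagonal, mul_comm]
      rw [hrw]
      exact hq
  have hinv := aux_one_le_inv hNpd h1N
  have hQdet : IsUnit Q.det := hpd.det_pos.ne'.isUnit
  have hNinvEq : N⁻¹ = D * Q * D := by
    apply Matrix.inv_eq_right_inv
    rw [hN]
    calc E * A * E * (D * Q * D) = E * A * (E * D) * (Q * D) := by
          simp only [Matrix.mul_assoc]
      _ = E * (A * Q) * D := by rw [hED]; simp only [Matrix.mul_assoc, Matrix.one_mul]
      _ = E * D := by rw [hAdef, Matrix.nonsing_inv_mul Q hQdet, Matrix.mul_one]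
      _ = 1 := hED
  have hfin := hinv.mul_mul_conjTranspose_same E
  rw [hEsymm] at hfin
  have heq2 : E * (N⁻¹ - 1) * E = Q - Matrix.diagonal (fun j => 1 / ∑ k, |A j k|) := by
    rw [hNinvEq, Matrix.mul_sub, Matrix.sub_mul]
    congr 1
    · calc E * (D * Q * D) * E = (E * D) * Q * (D * E) := by simp only [Matrix.mul_assoc]
        _ = Q := by rw [hED, hDE, Matrix.one_mul, Matrix.mul_one]
    · rw [Matrix.mul_one, hE, diagonal_mul_diagonal]
      ext i j
      rcases eq_or_ne i j with rfl | h
      · rw [Matrix.diagonal_apply_eq, Matrix.diagonal_apply_eq, one_div]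
        show (d i)⁻¹ * (d i)⁻¹ = (s i)⁻¹
        rw [← hd2 i, mul_inv]
      · rw [Matrix.diagonal_apply_ne _ h, Matrix.diagonal_apply_ne _ h]
  rwa [heq2] at hfin
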